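/- Let K be a field, m ≥ 1, n ≥ 0, d ≥ 2, p = M_{m,d-1}, R = K[X_1,...,X_m, Y_{1,1},...,Y_{p,n}], Z_1,...,Z_p the degree-(d-1) monomials in X_1,...,X_m, and I = ({X_i^d} ∪ {∑_j Z_j Y_{j,k}}). Set T = ∏_{i=1}^m X_i^{d-1}. Then T·X_i ∈ I for every 1 ≤ i ≤ m and T·Y_{j,k} ∈ I for all 1 ≤ j ≤ p, 1 ≤ k ≤ n; hence the colon ideal (I : T) contains the maximal graded ideal. -/

import Mathlib

open MvPolynomial in
lemma monomial_mapDomain_inl_aux {K : Type*} [CommSemiring K] {m : ℕ} {σ : Type*}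
    (f : Fin m →₀ ℕ) :
    (monomial (Finsupp.mapDomain Sum.inl f) (1:K) : MvPolynomial (Fin m ⊕ σ) K)
      = ∏ i : Fin m, X (Sum.inl i) ^ f i := by
  rw [monomial_eq, map_one, one_mul,
    Finsupp.prod_mapDomain_index (by simp) (fun b m₁ m₂ => pow_add _ _ _)]
  exact Finsupp.prod_fintype _ _ (by simp)

open MvPolynomial in
/-- Paper's core computation: with `R`, `I = I_{m,n,d}` as in the construction
and `T = ∏ X_i^(d-1)`, we have `T·X_i ∈ I` for all `i`, `T·Y_{j,k} ∈ I` for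
all `j, k`; hence the colon ideal `(I : T)` contains the maximal graded
ideal generated by all the variables. -/
theorem colon_contains_max (K : Type*) [Field K] (m n d p : ℕ)
    (hm : 1 ≤ m) (hd : 2 ≤ d) (hp : p = Nat.choose (m + d - 2) (d - 1))
    (Z : Fin p → (Fin m →₀ ℕ)) (hZinj : Function.Injective Z)
    (hZdeg : ∀ j, ((Z j).sum fun _ k => k) = d - 1)
    (hZsurj : ∀ e : Fin m →₀ ℕ, (e.sum fun _ k => k) = d - 1 → ∃ j, Z j = e) :
    let R := MvPolynomial (Fin m ⊕ Fin p × Fin n) K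
    let Zpoly : Fin p → R := fun j => monomial (Finsupp.mapDomain Sum.inl (Z j)) 1
    let I : Ideal R := Ideal.span
      ((Set.range fun i : Fin m => (X (Sum.inl i) : R) ^ d) ∪
       (Set.range fun k : Fin n => ∑ j : Fin p, Zpoly j * X (Sum.inr (j, k))))
    let T : R := ∏ i : Fin m, (X (Sum.inl i) : R) ^ (d - 1)
    (∀ i : Fin m, T * X (Sum.inl i) ∈ I) ∧
    (∀ (j : Fin p) (k : Fin n), T * X (Sum.inr (j, k)) ∈ I) ∧
    Ideal.span (Set.range (X : Fin m ⊕ Fin p × Fin n → R)) ≤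
      Submodule.colon I (Ideal.span {T}) := by
  intro R Zpoly I T
  have hZle : ∀ j i, Z j i ≤ d - 1 := by
    intro j i
    rw [← hZdeg j]
    by_cases h : i ∈ (Z j).support
    · exact Finset.single_le_sum (f := fun i => Z j i) (fun _ _ => Nat.zero_le _) h
    · simp [Finsupp.notMem_support_iff.mp h]
  have hXd : ∀ i, (X (Sum.inl i) : R) ^ d ∈ I :=
    fun i => Ideal.subset_span (Or.inl ⟨i, rfl⟩)
  have hF : ∀ k, (∑ j : Fin p, Zpoly j * X (Sum.inr (j, k))) ∈ I :=
    fun k => Ideal.subset_span (Or.inr ⟨k, rfl⟩)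
  have hZprod : ∀ j, Zpoly j = ∏ i : Fin m, (X (Sum.inl i) : R) ^ (Z j i) :=
    fun j => monomial_mapDomain_inl_aux (Z j)
  -- Part 1
  have part1 : ∀ i : Fin m, T * X (Sum.inl i) ∈ I := by
    intro i
    have hT : T = (∏ i' ∈ Finset.univ.erase i, (X (Sum.inl i') : R) ^ (d - 1)) *
        (X (Sum.inl i)) ^ (d - 1) :=
      (Finset.prod_erase_mul _ _ (Finset.mem_univ i)).symm
    have : T * X (Sum.inl i) =
        (∏ i' ∈ Finset.univ.erase i, (X (Sum.inl i') : R) ^ (d - 1)) *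
          (X (Sum.inl i)) ^ d := by
      rw [hT, mul_assoc, ← pow_succ]
      congr 2
      omega
    rw [this]
    exact Ideal.mul_mem_left _ _ (hXd i)
  -- complementary monomials
  set S : Fin p → R := fun j => ∏ i : Fin m, (X (Sum.inl i) : R) ^ (d - 1 - Z j i)
    with hS
  have hST : ∀ j, S j * Zpoly j = T := by
    intro j
    rw [hS, hZprod j, ← Finset.prod_mul_distrib]
    apply Finset.prod_congr rfl
    intro i _
    rw [← pow_add]
    congr 1
    have := hZle j i
    omega
  have hdvd : ∀ j q : Fin p, j ≠ q → ∃ i0, (X (Sum.inl i0) : R) ^ d ∣ S j * Zpoly q := by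
    intro j q hjq
    have hne : Z j ≠ Z q := fun h => hjq (hZinj h)
    have hsum : ∑ i, Z j i = ∑ i, Z q i := by
      have h1 := hZdeg j
      have h2 := hZdeg q
      rw [Finsupp.sum_fintype _ _ (fun _ => rfl)] at h1 h2
      omega
    have hex : ∃ i0, Z j i0 < Z q i0 := by
      by_contra h
      push_neg at h
      obtain ⟨i1, hi1⟩ := Finsupp.ne_iff.mp hne
      have hlt : Z q i1 < Z j i1 := lt_of_le_of_ne (h i1) fun he => hi1 he.symm
      have : ∑ i, Z q i < ∑ i, Z j i :=
        Finset.sum_lt_sum (fun i _ => h i) ⟨i1, Finset.mem_univ i1, hlt⟩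
      omega
    obtain ⟨i0, hi0⟩ := hex
    refine ⟨i0, ?_⟩
    have heq : S j * Zpoly q =
        ∏ i : Fin m, (X (Sum.inl i) : R) ^ (d - 1 - Z j i + Z q i) := by
      rw [hS, hZprod q, ← Finset.prod_mul_distrib]
      exact Finset.prod_congr rfl fun i _ => (pow_add _ _ _).symm
    rw [heq, ← Finset.prod_erase_mul _ _ (Finset.mem_univ i0)]
    have := hZle j i0
    exact Dvd.dvd.mul_left (pow_dvd_pow _ (by omega)) _
  -- Part 2
  have part2 : ∀ (j : Fin p) (k : Fin n), T * X (Sum.inr (j, k)) ∈ I := by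
    intro j k
    have key : T * X (Sum.inr (j, k)) =
        S j * (∑ q : Fin p, Zpoly q * X (Sum.inr (q, k))) -
        ∑ q ∈ Finset.univ.erase j, S j * (Zpoly q * X (Sum.inr (q, k))) := by
      rw [Finset.mul_sum, ← Finset.add_sum_erase _ _ (Finset.mem_univ j),
        add_sub_cancel_right, ← mul_assoc, hST j]
    rw [key]
    refine Ideal.sub_mem _ (Ideal.mul_mem_left _ _ (hF k)) (Ideal.sum_mem _ ?_)
    intro q hq
    obtain ⟨i0, c, hc⟩ := hdvd j q (Finset.ne_of_mem_erase hq).symm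
    rw [← mul_assoc, hc, mul_assoc]
    exact Ideal.mul_mem_right _ _ (hXd i0)
  refine ⟨part1, part2, ?_⟩
  rw [Ideal.span_le]
  rintro _ ⟨v, rfl⟩
  rw [SetLike.mem_coe, Submodule.mem_colon]
  intro pT hpT
  obtain ⟨c, rfl⟩ := Ideal.mem_span_singleton'.mp hpT
  rw [smul_eq_mul, show (X v : R) * (c * T) = c * (T * X v) by ring]
  apply Ideal.mul_mem_left
  match v with
  | Sum.inl i => exact part1 i
  | Sum.inr (j, k) => exact part2 j k
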